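/- Given annotated relations R₁, …, Rₙ over a commutative semiring and a set of attributes S' contained in the union of their schemas, the aggregation Σ over all attributes not in S' applied to the full join R₁ ⋈ ⋯ ⋈ Rₙ equals the result computed by any variable elimination order: for each eliminated attribute A, one may first join only the relations whose schema contains A, marginalize out A, and replace them by the result, and the final result is independent of the elimination order. -/
import Mathlib


open Finset

variable {Att : Type*} [Fintype Att] [DecidableEq Att]
variable {Val : Att → Type*} [∀ a, Fintype (Val a)] [∀ a, DecidableEq (Val a)]
variable {D : Type*} [CommSemiring D]

/-- `R` depends only on the attributes in schema `S`. -/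
def DependsOnlyOn (R : (∀ a, Val a) → D) (S : Finset Att) : Prop :=
  ∀ t₁ t₂ : ∀ a, Val a, (∀ a ∈ S, t₁ a = t₂ a) → R t₁ = R t₂

/-- Join of annotated relations: multiply the annotations. -/
def joinRel (R T : (∀ a, Val a) → D) : (∀ a, Val a) → D := fun t => R t * T t

/-- Marginalize out a single attribute `A`: sum over all values of `A`. -/
def marg (A : Att) (R : (∀ a, Val a) → D) : (∀ a, Val a) → D :=
  fun t => ∑ v : Val A, R (Function.update t A v)

/-- Marginalize out all attributes in `E`. -/
def margOver (E : Finset Att) (R : (∀ a, Val a) → D) : (∀ a, Val a) → D :=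
  fun t => ∑ s : ∀ a, Val a, if ∀ a, a ∉ E → s a = t a then R s else 0

/-- Join a list of annotated relations. -/
def joinList (rs : List ((∀ a, Val a) → D)) : (∀ a, Val a) → D :=
  fun t => (rs.map (fun R => R t)).prod

/-- One variable-elimination step: the relations (with schemas) whose schema
contains `A` are clustered, joined, and `A` is marginalized out of the result;
the other relations are kept untouched. -/
def elimStep (A : Att) (rs : List (Finset Att × ((∀ a, Val a) → D))) :
    List (Finset Att × ((∀ a, Val a) → D)) :=
  rs.filter (fun p : Finset Att × ((∀ a, Val a) → D) => decide (A ∉ p.1)) ++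
    [(((rs.filter (fun p : Finset Att × ((∀ a, Val a) → D) => decide (A ∈ p.1))).foldr (fun (p : Finset Att × ((∀ a, Val a) → D)) s => p.1 ∪ s) ∅).erase A,
      marg A (joinList ((rs.filter (fun p : Finset Att × ((∀ a, Val a) → D) => decide (A ∈ p.1))).map Prod.snd)))]

/-- Variable-elimination correctness and order independence: for any order
`order₁` enumerating (without repetition) exactly the attributes of the join
graph that are not in `S'`, performing the elimination steps in that order and
joining the resulting relations gives the marginalization of the full join
`R₁ ⋈ ⋯ ⋈ Rₙ` over all attributes outside `S'` (computed in any order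
`order₂`); in particular the result is independent of the elimination order. -/
private lemma update_const {R : (∀ a, Val a) → D} {S : Finset Att} {A : Att}
    (hA : A ∉ S) (hR : DependsOnlyOn R S) (t : ∀ a, Val a) (v : Val A) :
    R (Function.update t A v) = R t := by
  apply hR
  intro a ha
  have : a ≠ A := fun h => hA (h ▸ ha)
  simp [Function.update_of_ne this]

private lemma dep_joinList (l : List (Finset Att × ((∀ a, Val a) → D)))
    (h : ∀ p ∈ l, DependsOnlyOn p.2 p.1) :
    DependsOnlyOn (joinList (l.map Prod.snd)) (l.foldr (fun p s => p.1 ∪ s) ∅) := by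
  induction l with
  | nil => intro t₁ t₂ _; rfl
  | cons p l ih =>
    intro t₁ t₂ hag
    simp only [joinList, List.map_cons, List.prod_cons, List.map_map]
    have h1 : p.2 t₁ = p.2 t₂ := by
      apply h p (by simp)
      intro a ha
      exact hag a (by simp [List.foldr_cons, Finset.mem_union, ha])
    have h2 := ih (fun q hq => h q (by simp [hq])) t₁ t₂
      (fun a ha => hag a (by simp [List.foldr_cons, Finset.mem_union, ha]))
    simp only [joinList, List.map_map] at h2
    rw [h1, h2]

private lemma dep_marg {R : (∀ a, Val a) → D} {S : Finset Att} (A : Att)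
    (hR : DependsOnlyOn R S) : DependsOnlyOn (marg A R) (S.erase A) := by
  intro t₁ t₂ hag
  simp only [marg]
  refine Finset.sum_congr rfl fun v _ => hR _ _ fun a ha => ?_
  by_cases hA : a = A
  · subst hA; simp
  · rw [Function.update_of_ne hA, Function.update_of_ne hA]
    exact hag a (Finset.mem_erase.2 ⟨hA, ha⟩)

private lemma elimStep_dep (A : Att) (rs : List (Finset Att × ((∀ a, Val a) → D)))
    (h : ∀ p ∈ rs, DependsOnlyOn p.2 p.1) :
    ∀ p ∈ elimStep A rs, DependsOnlyOn p.2 p.1 := by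
  intro p hp
  simp only [elimStep, List.mem_append, List.mem_singleton] at hp
  rcases hp with hp | hp
  · exact h p (List.mem_of_mem_filter hp)
  · subst hp
    exact dep_marg A (dep_joinList _ fun q hq => h q (List.mem_of_mem_filter hq))

private lemma joinList_elimStep (A : Att) (rs : List (Finset Att × ((∀ a, Val a) → D)))
    (h : ∀ p ∈ rs, DependsOnlyOn p.2 p.1) :
    joinList ((elimStep A rs).map Prod.snd) = marg A (joinList (rs.map Prod.snd)) := by
  classical
  funext t
  set l₁ := rs.filter (fun p : Finset Att × ((∀ a, Val a) → D) => decide (A ∉ p.1)) with hl₁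
  set l₂ := rs.filter (fun p : Finset Att × ((∀ a, Val a) → D) => decide (A ∈ p.1)) with hl₂
  have hsplit : ∀ s : ∀ a, Val a,
      joinList (rs.map Prod.snd) s = joinList (l₁.map Prod.snd) s * joinList (l₂.map Prod.snd) s := by
    intro s
    have hperm : List.Perm (l₁ ++ l₂) rs := by
      have := List.filter_append_perm
        (fun p : Finset Att × ((∀ a, Val a) → D) => decide (A ∉ p.1)) rs
      have hfun : (fun p : Finset Att × ((∀ a, Val a) → D) => !decide (A ∉ p.1))
          = (fun p : Finset Att × ((∀ a, Val a) → D) => decide (A ∈ p.1)) := by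
        funext p; simp [decide_not]
      rw [hfun] at this
      exact this
    have : List.Perm ((rs.map Prod.snd).map (fun R => R s))
        (((l₁ ++ l₂).map Prod.snd).map (fun R => R s)) :=
      ((hperm.map Prod.snd).map (fun R => R s)).symm
    simp only [joinList]
    rw [this.prod_eq]
    simp [List.prod_append]
  have hconst : ∀ v : Val A,
      joinList (l₁.map Prod.snd) (Function.update t A v) = joinList (l₁.map Prod.snd) t := by
    intro v
    simp only [joinList, List.map_map]
    congr 1
    apply List.map_congr_left
    intro p hp
    have hA : A ∉ p.1 := by
      have := List.of_mem_filter hp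
      simpa using this
    exact update_const hA (h p (List.mem_of_mem_filter hp)) t v
  have hR : marg A (joinList (rs.map Prod.snd)) t
      = joinList (l₁.map Prod.snd) t * marg A (joinList (l₂.map Prod.snd)) t := by
    simp only [marg]
    rw [Finset.mul_sum]
    refine Finset.sum_congr rfl fun v _ => ?_
    rw [hsplit, hconst]
  rw [hR]
  simp only [elimStep, ← hl₁, ← hl₂, List.map_append, List.map_cons, List.map_nil, joinList,
    List.prod_append, List.prod_cons, List.prod_nil, mul_one, List.map_map]

private lemma foldl_elim (order : List Att) :
    ∀ rs : List (Finset Att × ((∀ a, Val a) → D)), (∀ p ∈ rs, DependsOnlyOn p.2 p.1) →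
    joinList ((order.foldl (fun l A => elimStep A l) rs).map Prod.snd)
      = order.foldl (fun R A => marg A R) (joinList (rs.map Prod.snd)) := by
  induction order with
  | nil => intro rs _; rfl
  | cons A order ih =>
    intro rs h
    simp only [List.foldl_cons]
    rw [ih _ (elimStep_dep A rs h), joinList_elimStep A rs h]

private instance marg_rcomm :
    RightCommutative (fun (R : (∀ a, Val a) → D) (A : Att) => marg A R) := by
  constructor
  intro R A B
  rcases eq_or_ne A B with rfl | hAB
  · rfl
  · funext t
    simp only [marg]
    rw [Finset.sum_comm]
    refine Finset.sum_congr rfl fun v _ => Finset.sum_congr rfl fun w _ => ?_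
    rw [Function.update_comm hAB]

theorem variable_elimination_order_independence
    (rs : List (Finset Att × ((∀ a, Val a) → D)))
    (hdep : ∀ p ∈ rs, DependsOnlyOn p.2 p.1)
    (S' : Finset Att)
    (hS' : S' ⊆ rs.foldr (fun p s => p.1 ∪ s) ∅)
    (order₁ order₂ : List Att)
    (hperm : order₁.Perm order₂)
    (hnodup : order₁.Nodup)
    (hmem : ∀ A : Att,
      A ∈ order₁ ↔ (A ∈ rs.foldr (fun p s => p.1 ∪ s) ∅ ∧ A ∉ S')) :
    joinList ((order₁.foldl (fun l A => elimStep A l) rs).map Prod.snd) =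
      order₂.foldl (fun R A => marg A R) (joinList (rs.map Prod.snd)) := by
  rw [foldl_elim order₁ rs hdep]
  exact hperm.foldl_eq _
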